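/- arXiv:2107.14705 — 3 statements merged into one kernel-verified Lean document; each statement's English description precedes it below -/
import Mathlib

section
/- Under the MMSB setup, let η = min_{1≤k≤K} ((V_{*,1}(𝓘,:) V_{*,1}(𝓘,:)')^{-1}𝟏)(k) and π_min = min_{1≤k≤K} Σ_{i=1}^n Π(i,k). Then η ≥ (τ+δ_min)² π_min / ((τ+δ_max)² K λ_1(Π'Π)); in particular η > 0. -/
open Matrix BigOperators

/-- Euclidean norm of the `i`-th row of a matrix. -/
noncomputable def rowNorm {m k : ℕ} (M : Matrix (Fin m) (Fin k) ℝ) (i : Fin m) : ℝ :=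
  Real.sqrt (∑ j, (M i j) ^ 2)

lemma trace_eq_sum_eigs {K : ℕ} (A : Matrix (Fin K) (Fin K) ℝ) (hA : A.IsHermitian) :
    A.trace = ∑ i, hA.eigenvalues i := by
  simpa using hA.trace_eq_sum_eigenvalues

/-- from the proof of Lemma 5.6: with
`η = min_k ((V_{*,1}(𝓘,:)V_{*,1}(𝓘,:)')⁻¹𝟏)(k)` and `π_min = min_k Σ_i Π(i,k)`,
`η ≥ (τ+δ_min)² π_min / ((τ+δ_max)² K λ₁(Π'Π))`, so in particular `η > 0`. -/
theorem stmt_14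
    {n K : ℕ} (hn : 0 < n) (hK : 0 < K) (hKn : K ≤ n)
    (Pi : Matrix (Fin n) (Fin K) ℝ)
    (hPi_nonneg : ∀ i k, 0 ≤ Pi i k)
    (hPi_rowsum : ∀ i, ∑ k, Pi i k = 1)
    (hPi_rank : Pi.rank = K)
    (hpure : ∀ k : Fin K, ∃ i : Fin n, ∀ l, Pi i l = if l = k then 1 else 0)
    (Pt : Matrix (Fin K) (Fin K) ℝ)
    (hPt_symm : Pt.IsSymm)
    (hPt_nonneg : ∀ k l, 0 ≤ Pt k l)
    (hPt_rank : Pt.rank = K)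
    (hPt_le_one : ∀ k l, Pt k l ≤ 1)
    (hPt_max : ∃ k l, Pt k l = 1)
    (ρ τ : ℝ) (hρ0 : 0 < ρ) (hρ1 : ρ ≤ 1) (hτ : 0 ≤ τ)
    (Om : Matrix (Fin n) (Fin n) ℝ) (hOm : Om = Pi * (ρ • Pt) * Piᵀ)
    (deg : Fin n → ℝ) (hdeg : ∀ i, deg i = ∑ j, Om i j)
    (hpos : ∀ i, 0 < deg i + τ)
    (Ltau : Matrix (Fin n) (Fin n) ℝ)
    (hLtau : Ltau = Matrix.diagonal (fun i => (Real.sqrt (deg i + τ))⁻¹) * Om *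
      Matrix.diagonal (fun i => (Real.sqrt (deg i + τ))⁻¹))
    (Idx : Fin K → Fin n) (hIdx : Pi.submatrix Idx id = 1)
    (V : Matrix (Fin n) (Fin K) ℝ) (e : Fin K → ℝ)
    (hVorth : Vᵀ * V = 1) (he : ∀ k, e k ≠ 0)
    (hVE : Ltau = V * Matrix.diagonal e * Vᵀ)
    (hVrow : ∀ i, V i ≠ 0)
    (Vstar1 : Matrix (Fin n) (Fin K) ℝ)
    (hVstar1 : ∀ i k, Vstar1 i k = V i k / rowNorm V i)
    (hVstar1unit : IsUnit (Vstar1.submatrix Idx id))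
    (hH : (Piᵀ * Pi).IsHermitian) :
    (τ + ⨅ j, deg j) ^ 2 * (⨅ k, ∑ i, Pi i k) /
        ((τ + ⨆ j, deg j) ^ 2 * (K : ℝ) * ⨆ k, hH.eigenvalues k) ≤
      (⨅ k, (((Vstar1.submatrix Idx id) * (Vstar1.submatrix Idx id)ᵀ)⁻¹ *ᵥ
        (fun _ => (1 : ℝ))) k) ∧
    0 < (⨅ k, (((Vstar1.submatrix Idx id) * (Vstar1.submatrix Idx id)ᵀ)⁻¹ *ᵥ
      (fun _ => (1 : ℝ))) k) := by
  classical
  haveI : Nonempty (Fin n) := ⟨⟨0, hn⟩⟩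
  haveI : Nonempty (Fin K) := ⟨⟨0, hK⟩⟩
  -- basic positivity of degrees
  set d : Fin n → ℝ := fun i => deg i + τ with hd
  have hd0 : ∀ i, 0 < d i := hpos
  have hs0 : ∀ i, 0 < Real.sqrt (d i) := fun i => Real.sqrt_pos.2 (hd0 i)
  set Dm : Matrix (Fin n) (Fin n) ℝ :=
    Matrix.diagonal (fun i => (Real.sqrt (d i))⁻¹) with hDm
  set Ps : Matrix (Fin n) (Fin K) ℝ := Dm * Pi with hPs
  set G : Matrix (Fin K) (Fin K) ℝ := Psᵀ * Ps with hG
  set Einv : Matrix (Fin K) (Fin K) ℝ := Matrix.diagonal (fun k => (e k)⁻¹) with hEinv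
  have hEe : Matrix.diagonal e * Einv = 1 := by
    rw [hEinv, Matrix.diagonal_mul_diagonal]
    convert Matrix.diagonal_one with k
    exact mul_inv_cancel₀ (he k)
  set B : Matrix (Fin K) (Fin K) ℝ := (ρ • Pt) * Psᵀ * V * Einv with hB
  -- V = Ps * B
  have hLt : Ltau = Ps * (ρ • Pt) * Psᵀ := by
    rw [hLtau, hOm, hPs, Matrix.transpose_mul, hDm, Matrix.diagonal_transpose]
    simp only [Matrix.mul_assoc]
  have hLV : Ltau * V = V * Matrix.diagonal e := by
    rw [hVE, Matrix.mul_assoc (V * Matrix.diagonal e) Vᵀ V, hVorth, Matrix.mul_one]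
  have hVB : V = Ps * B := by
    have h2 : V = Ltau * V * Einv := by
      rw [hLV, Matrix.mul_assoc, hEe, Matrix.mul_one]
    rw [h2, hLt, hB]
    simp only [Matrix.mul_assoc]
  -- BᵀGB = 1
  have hBGB : Bᵀ * G * B = 1 := by
    have : (Ps * B)ᵀ * (Ps * B) = 1 := by rw [← hVB]; exact hVorth
    rw [Matrix.transpose_mul] at this
    rw [hG, ← this]
    simp only [Matrix.mul_assoc]
  have hdetB : IsUnit B.det := by
    have h := congrArg Matrix.det hBGB
    rw [Matrix.det_mul, Matrix.det_mul, Matrix.det_transpose, Matrix.det_one] at h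
    refine isUnit_iff_ne_zero.2 fun h0 => ?_
    rw [h0] at h; simp at h
  have hBBi : B * B⁻¹ = 1 := Matrix.mul_nonsing_inv B hdetB
  have hBiB : B⁻¹ * B = 1 := Matrix.nonsing_inv_mul B hdetB
  -- Bᵀ * G = B⁻¹ and G = B⁻¹ᵀ * B⁻¹
  have hBtG : Bᵀ * G = B⁻¹ := by
    have := congrArg (fun M => M * B⁻¹) hBGB
    simpa [Matrix.mul_assoc, hBBi] using this
  have hGBi : G = B⁻¹ᵀ * B⁻¹ := by
    have := congrArg (fun M => (Bᵀ)⁻¹ * M) hBtG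
    rw [← Matrix.mul_assoc, Matrix.nonsing_inv_mul _ (by rwa [Matrix.det_transpose]),
      Matrix.one_mul] at this
    rw [this, Matrix.transpose_nonsing_inv]
  -- rows at pure nodes
  have hPiIdx : ∀ k l, Pi (Idx k) l = if k = l then 1 else 0 := by
    intro k l
    have := congrFun (congrFun hIdx k) l
    simpa [Matrix.submatrix_apply, Matrix.one_apply] using this
  have hVIdx : ∀ k l, V (Idx k) l = (Real.sqrt (d (Idx k)))⁻¹ * B k l := by
    intro k l
    rw [hVB, hPs, Matrix.mul_assoc, hDm, Matrix.diagonal_mul, Matrix.mul_apply]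
    simp [hPiIdx, ite_mul]
  -- row norms of B
  set b : Fin K → ℝ := fun k => Real.sqrt (∑ l, (B k l) ^ 2) with hbdef
  have hbsum_nonneg : ∀ k, (0:ℝ) ≤ ∑ l, (B k l) ^ 2 := fun k =>
    Finset.sum_nonneg fun l _ => sq_nonneg _
  have hbsq : ∀ k, b k ^ 2 = ∑ l, (B k l) ^ 2 := fun k => Real.sq_sqrt (hbsum_nonneg k)
  have hbpos : ∀ k, 0 < b k := by
    intro k
    rw [hbdef]
    refine Real.sqrt_pos.2 ?_
    rcases (hbsum_nonneg k).lt_or_eq with h | h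
    · exact h
    · exfalso
      have hz : ∀ l, B k l = 0 := by
        intro l
        have := (Finset.sum_eq_zero_iff_of_nonneg
          (fun l _ => sq_nonneg (B k l))).1 h.symm l (Finset.mem_univ l)
        exact pow_eq_zero_iff (two_ne_zero) |>.1 this
      have h1 : (B * B⁻¹) k k = 0 := by
        rw [Matrix.mul_apply]
        exact Finset.sum_eq_zero fun l _ => by rw [hz l, zero_mul]
      rw [hBBi, Matrix.one_apply_eq] at h1
      exact one_ne_zero h1
  have hrowNormI : ∀ k, rowNorm V (Idx k) = (Real.sqrt (d (Idx k)))⁻¹ * b k := by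
    intro k
    rw [rowNorm]
    have : ∀ l, (V (Idx k) l) ^ 2 = ((Real.sqrt (d (Idx k)))⁻¹)^2 * (B k l)^2 := by
      intro l; rw [hVIdx k l]; ring
    rw [Finset.sum_congr rfl (fun l _ => this l), ← Finset.mul_sum,
      Real.sqrt_mul (sq_nonneg _), Real.sqrt_sq (le_of_lt (inv_pos.2 (hs0 _))), hbdef]
  -- N = diagonal b⁻¹ * B
  set N : Matrix (Fin K) (Fin K) ℝ := Vstar1.submatrix Idx id with hNdef
  have hN : N = Matrix.diagonal (fun k => (b k)⁻¹) * B := by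
    ext k l
    rw [hNdef, Matrix.submatrix_apply, id_eq, hVstar1, Matrix.diagonal_mul, hVIdx,
      hrowNormI]
    rw [mul_div_mul_left _ _ (inv_pos.2 (hs0 _)).ne', div_eq_inv_mul]
  have hDbi : Matrix.diagonal (fun k => (b k)⁻¹) * Matrix.diagonal b = 1 := by
    rw [Matrix.diagonal_mul_diagonal]
    convert Matrix.diagonal_one with k
    exact inv_mul_cancel₀ (hbpos k).ne'
  -- inverse of N * Nᵀ
  have hNNinv : (N * Nᵀ)⁻¹ = Matrix.diagonal b * G * Matrix.diagonal b := by
    refine Matrix.inv_eq_right_inv ?_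
    rw [hN, Matrix.transpose_mul, Matrix.diagonal_transpose]
    calc Matrix.diagonal (fun k => (b k)⁻¹) * B *
          (Bᵀ * Matrix.diagonal (fun k => (b k)⁻¹)) *
          (Matrix.diagonal b * G * Matrix.diagonal b)
        = Matrix.diagonal (fun k => (b k)⁻¹) * (B * (Bᵀ *
            ((Matrix.diagonal (fun k => (b k)⁻¹) * Matrix.diagonal b) *
              (G * Matrix.diagonal b)))) := by simp only [Matrix.mul_assoc]
      _ = Matrix.diagonal (fun k => (b k)⁻¹) * (B * ((Bᵀ * G) * Matrix.diagonal b)) := by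
          rw [hDbi, Matrix.one_mul, Matrix.mul_assoc Bᵀ G]
      _ = Matrix.diagonal (fun k => (b k)⁻¹) * ((B * B⁻¹) * Matrix.diagonal b) := by
          rw [hBtG, Matrix.mul_assoc B]
      _ = 1 := by rw [hBBi, Matrix.one_mul, hDbi]
  -- entries of G
  have hPs_app : ∀ i j, Ps i j = (Real.sqrt (d i))⁻¹ * Pi i j := by
    intro i j; rw [hPs, hDm, Matrix.diagonal_mul]
  have hGapp : ∀ k l, G k l = ∑ i, (d i)⁻¹ * (Pi i k * Pi i l) := by
    intro k l
    rw [hG, Matrix.mul_apply]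
    refine Finset.sum_congr rfl fun i _ => ?_
    rw [Matrix.transpose_apply, hPs_app, hPs_app]
    have hss : ((Real.sqrt (d i))⁻¹) * ((Real.sqrt (d i))⁻¹) = (d i)⁻¹ := by
      rw [← mul_inv, Real.mul_self_sqrt (hd0 i).le]
    rw [mul_mul_mul_comm, hss]
  have hGnonneg : ∀ k l, 0 ≤ G k l := by
    intro k l
    rw [hGapp]
    exact Finset.sum_nonneg fun i _ => mul_nonneg (inv_nonneg.2 (hd0 i).le)
      (mul_nonneg (hPi_nonneg i k) (hPi_nonneg i l))
  -- extremal degrees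
  obtain ⟨j0, -, hj0⟩ := Finset.exists_min_image Finset.univ deg ⟨⟨0, hn⟩, Finset.mem_univ _⟩
  obtain ⟨j1, -, hj1⟩ := Finset.exists_max_image Finset.univ deg ⟨⟨0, hn⟩, Finset.mem_univ _⟩
  have hinf : ⨅ j, deg j = deg j0 :=
    le_antisymm (ciInf_le (Set.Finite.bddBelow (Set.finite_range deg)) j0)
      (le_ciInf fun i => hj0 i (Finset.mem_univ i))
  have hsup : ⨆ j, deg j = deg j1 :=
    le_antisymm (ciSup_le fun i => hj1 i (Finset.mem_univ i))
      (le_ciSup (Set.Finite.bddAbove (Set.finite_range deg)) j1)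
  set Am : ℝ := τ + deg j0 with hAm
  set Bm : ℝ := τ + deg j1 with hBm
  have hA0 : 0 < Am := by have := hpos j0; rw [hAm]; linarith
  have hB0 : 0 < Bm := by have := hpos j1; rw [hBm]; linarith
  have hAB : Am ≤ Bm := by
    have h1 := hj0 j1 (Finset.mem_univ _); rw [hAm, hBm]; linarith
  have hdlow : ∀ i, Am ≤ d i := by
    intro i; have := hj0 i (Finset.mem_univ i); rw [hAm, hd]; simp; linarith
  have hdhigh : ∀ i, d i ≤ Bm := by
    intro i; have := hj1 i (Finset.mem_univ i); rw [hBm, hd]; simp; linarith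
  -- eigenvalue facts
  have hPSD : (Piᵀ * Pi).PosSemidef := by
    simpa using Matrix.posSemidef_conjTranspose_mul_self Pi
  set lam : ℝ := ⨆ k, hH.eigenvalues k with hlam
  have hlamle : ∀ k, hH.eigenvalues k ≤ lam := fun k =>
    le_ciSup (Set.Finite.bddAbove (Set.finite_range _)) k
  have hlamnn : ∀ k, 0 ≤ hH.eigenvalues k := fun k => hPSD.eigenvalues_nonneg k
  have htr : (Piᵀ * Pi).trace = ∑ k, hH.eigenvalues k := trace_eq_sum_eigs _ hH
  have htrval : (Piᵀ * Pi).trace = ∑ k, ∑ i, (Pi i k) ^ 2 := by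
    rw [Matrix.trace]
    refine Finset.sum_congr rfl fun k _ => ?_
    rw [Matrix.diag_apply, Matrix.mul_apply]
    exact Finset.sum_congr rfl fun i _ => by rw [Matrix.transpose_apply, sq]
  have htrpos : 0 < (Piᵀ * Pi).trace := by
    obtain ⟨i0, hi0⟩ := hpure ⟨0, hK⟩
    rw [htrval]
    refine Finset.sum_pos' (fun k _ => Finset.sum_nonneg fun i _ => sq_nonneg _)
      ⟨⟨0, hK⟩, Finset.mem_univ _, ?_⟩
    have h1 : (Pi i0 ⟨0, hK⟩) ^ 2 = 1 := by rw [hi0]; simp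
    have h2 : (Pi i0 ⟨0, hK⟩) ^ 2 ≤ ∑ i, (Pi i ⟨0, hK⟩) ^ 2 :=
      Finset.single_le_sum (f := fun i => (Pi i (⟨0, hK⟩ : Fin K)) ^ 2)
        (fun i _ => sq_nonneg _) (Finset.mem_univ i0)
    linarith
  have hKpos : (0:ℝ) < (K:ℝ) := Nat.cast_pos.2 hK
  have hlampos : 0 < lam := by
    by_contra h
    push_neg at h
    have hz : ∀ k, hH.eigenvalues k = 0 := fun k =>
      le_antisymm ((hlamle k).trans h) (hlamnn k)
    rw [htr, Finset.sum_eq_zero fun k _ => hz k] at htrpos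
    exact lt_irrefl 0 htrpos
  have htrKlam : (Piᵀ * Pi).trace ≤ (K:ℝ) * lam := by
    rw [htr]
    calc ∑ k, hH.eigenvalues k ≤ ∑ _k : Fin K, lam := Finset.sum_le_sum fun k _ => hlamle k
      _ = (K:ℝ) * lam := by
          rw [Finset.sum_const, Finset.card_univ, Fintype.card_fin, nsmul_eq_mul]
  have hGkk_le : ∀ k, G k k ≤ Am⁻¹ * ((K:ℝ) * lam) := by
    intro k
    rw [hGapp]
    calc ∑ i, (d i)⁻¹ * (Pi i k * Pi i k)
        ≤ ∑ i, Am⁻¹ * (Pi i k) ^ 2 := by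
          refine Finset.sum_le_sum fun i _ => ?_
          rw [← sq]
          exact mul_le_mul_of_nonneg_right (inv_anti₀ hA0 (hdlow i)) (sq_nonneg _)
      _ = Am⁻¹ * ∑ i, (Pi i k) ^ 2 := (Finset.mul_sum _ _ _).symm
      _ ≤ Am⁻¹ * ((K:ℝ) * lam) := by
          refine mul_le_mul_of_nonneg_left ?_ (inv_nonneg.2 hA0.le)
          have h2 : ∑ i, (Pi i k) ^ 2 ≤ (Piᵀ * Pi).trace := by
            rw [htrval]
            exact Finset.single_le_sum (f := fun l => ∑ i, (Pi i l) ^ 2)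
              (fun l _ => Finset.sum_nonneg fun i _ => sq_nonneg _) (Finset.mem_univ k)
          exact h2.trans htrKlam
  -- Cauchy-Schwarz lower bound for b
  have hCS : ∀ k, (1:ℝ) ≤ b k ^ 2 * G k k := by
    intro k
    have h1 : (1:ℝ) = ∑ l, B k l * B⁻¹ l k := by
      rw [← Matrix.mul_apply, hBBi, Matrix.one_apply_eq]
    have h3 : G k k = ∑ l, (B⁻¹ l k) ^ 2 := by
      rw [hGBi, Matrix.mul_apply]
      exact Finset.sum_congr rfl fun l _ => by rw [Matrix.transpose_apply, sq]
    calc (1:ℝ) = (∑ l, B k l * B⁻¹ l k) ^ 2 := by rw [← h1]; norm_num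
      _ ≤ (∑ l, (B k l) ^ 2) * ∑ l, (B⁻¹ l k) ^ 2 :=
          Finset.sum_mul_sq_le_sq_mul_sq Finset.univ _ _
      _ = b k ^ 2 * G k k := by rw [hbsq, h3]
  have hKlam : (0:ℝ) < (K:ℝ) * lam := mul_pos hKpos hlampos
  have hb2 : ∀ k, Am / ((K:ℝ) * lam) ≤ b k ^ 2 := by
    intro k
    have h5 : (1:ℝ) ≤ b k ^ 2 * (Am⁻¹ * ((K:ℝ) * lam)) :=
      (hCS k).trans (mul_le_mul_of_nonneg_left (hGkk_le k) (sq_nonneg _))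
    have hC : 0 < Am⁻¹ * ((K:ℝ) * lam) := mul_pos (inv_pos.2 hA0) hKlam
    have h6 := (div_le_iff₀ hC).mpr h5
    have h7 : Am / ((K:ℝ) * lam) = 1 / (Am⁻¹ * ((K:ℝ) * lam)) := by
      field_simp
    rw [h7]; exact h6
  set bet : ℝ := Real.sqrt (Am / ((K:ℝ) * lam)) with hbet
  have hbetsq : bet ^ 2 = Am / ((K:ℝ) * lam) :=
    Real.sq_sqrt (div_nonneg hA0.le hKlam.le)
  have hbetpos : 0 < bet := Real.sqrt_pos.2 (div_pos hA0 hKlam)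
  have hbetle : ∀ k, bet ≤ b k := by
    intro k
    have := Real.sqrt_le_sqrt (hb2 k)
    rwa [Real.sqrt_sq (hbpos k).le] at this
  -- row sums of G
  set pim : ℝ := ⨅ k, ∑ i, Pi i k with hpim
  have hpim_le : ∀ k, pim ≤ ∑ i, Pi i k := fun k =>
    ciInf_le (Set.Finite.bddBelow (Set.finite_range _)) k
  have hpim1 : (1:ℝ) ≤ pim := by
    refine le_ciInf fun k => ?_
    obtain ⟨i, hi⟩ := hpure k
    have h1 : Pi i k = 1 := by rw [hi]; simp
    have h2 : Pi i k ≤ ∑ i', Pi i' k :=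
      Finset.single_le_sum (fun i' _ => hPi_nonneg i' k) (Finset.mem_univ i)
    linarith
  have hpim0 : 0 < pim := lt_of_lt_of_le one_pos hpim1
  have hGrow : ∀ k, ∑ l, G k l = ∑ i, (d i)⁻¹ * Pi i k := by
    intro k
    simp only [hGapp]
    rw [Finset.sum_comm]
    refine Finset.sum_congr rfl fun i _ => ?_
    rw [← Finset.mul_sum, ← Finset.mul_sum, hPi_rowsum i, mul_one]
  have hGrow_ge : ∀ k, pim / Bm ≤ ∑ l, G k l := by
    intro k
    rw [hGrow]
    calc pim / Bm ≤ (∑ i, Pi i k) / Bm := (div_le_div_iff_of_pos_right hB0).mpr (hpim_le k)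
      _ ≤ ∑ i, (d i)⁻¹ * Pi i k := by
          rw [div_eq_inv_mul, Finset.mul_sum]
          refine Finset.sum_le_sum fun i _ => ?_
          exact mul_le_mul_of_nonneg_right (inv_anti₀ (hd0 i) (hdhigh i))
            (hPi_nonneg i k)
  -- entry formula for the target vector
  have heta : ∀ k, (((N * Nᵀ)⁻¹) *ᵥ (fun _ => (1:ℝ))) k = ∑ l, b k * G k l * b l := by
    intro k
    rw [hNNinv]
    simp only [Matrix.mulVec, dotProduct, mul_one]
    exact Finset.sum_congr rfl fun l _ => by rw [Matrix.mul_diagonal, Matrix.diagonal_mul]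
  have hetalb : ∀ k, (Am / ((K:ℝ) * lam)) * (pim / Bm) ≤
      (((N * Nᵀ)⁻¹) *ᵥ (fun _ => (1:ℝ))) k := by
    intro k
    rw [heta k]
    have h6 : ∀ l, bet * G k l * bet ≤ b k * G k l * b l := fun l =>
      mul_le_mul (mul_le_mul_of_nonneg_right (hbetle k) (hGnonneg k l)) (hbetle l)
        hbetpos.le (mul_nonneg (hbpos k).le (hGnonneg k l))
    have h7 : ∑ l, bet * G k l * bet = bet ^ 2 * ∑ l, G k l := by
      rw [Finset.mul_sum]
      exact Finset.sum_congr rfl fun l _ => by ring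
    calc (Am / ((K:ℝ) * lam)) * (pim / Bm) = bet ^ 2 * (pim / Bm) := by rw [hbetsq]
      _ ≤ bet ^ 2 * ∑ l, G k l :=
          mul_le_mul_of_nonneg_left (hGrow_ge k) (sq_nonneg bet)
      _ = ∑ l, bet * G k l * bet := h7.symm
      _ ≤ ∑ l, b k * G k l * b l := Finset.sum_le_sum fun l _ => h6 l
  -- final comparison
  have hmain : Am ^ 2 * pim / (Bm ^ 2 * (K:ℝ) * lam) ≤ (Am / ((K:ℝ) * lam)) * (pim / Bm) := by
    rw [div_le_iff₀ (by positivity)]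
    have hexp : (Am / ((K:ℝ) * lam)) * (pim / Bm) * (Bm ^ 2 * (K:ℝ) * lam)
        = Am * pim * Bm := by
      field_simp
    rw [hexp]
    calc Am ^ 2 * pim = Am * pim * Am := by ring
      _ ≤ Am * pim * Bm := mul_le_mul_of_nonneg_left hAB (mul_nonneg hA0.le hpim0.le)
  have key : Am ^ 2 * pim / (Bm ^ 2 * (K:ℝ) * lam) ≤
      ⨅ k, (((N * Nᵀ)⁻¹) *ᵥ (fun _ => (1:ℝ))) k :=
    le_ciInf fun k => hmain.trans (hetalb k)
  have keypos : 0 < Am ^ 2 * pim / (Bm ^ 2 * (K:ℝ) * lam) := by positivity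
  rw [hinf, hsup]
  exact ⟨key, lt_of_lt_of_le keypos key⟩
end

section
/- Let A be a symmetric n×n real matrix with nonnegative entries, let D be the diagonal matrix of its row sums with D(i,i) > 0 for all i, let τ ≥ 0, D_τ = D + τI and L_τ = D_τ^{-1/2} A D_τ^{-1/2}, and let 𝒟_τ be any n×n positive definite diagonal matrix. Then ‖L_τ‖ ≤ 1 (spectral norm), and ‖D_τ^{-1/2} A D_τ^{-1/2} − 𝒟_τ^{-1/2} A 𝒟_τ^{-1/2}‖ ≤ 2‖I − D_τ^{1/2}𝒟_τ^{-1/2}‖ + ‖I − D_τ^{1/2}𝒟_τ^{-1/2}‖². -/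
open Matrix BigOperators

local notation "⟪" x ", " y "⟫" => @inner ℝ _ _ x y

/-- Spectral (operator ℓ₂) norm of a square real matrix. -/
noncomputable def specNorm {m : ℕ} (A : Matrix (Fin m) (Fin m) ℝ) : ℝ :=
  ‖Matrix.toEuclideanCLM (𝕜 := ℝ) A‖


open Matrix BigOperators


lemma polar_norm_le {n : ℕ} (T : EuclideanSpace ℝ (Fin n) →L[ℝ] EuclideanSpace ℝ (Fin n))
    (hsym : ∀ x y, ⟪T x, y⟫ = ⟪x, T y⟫)
    (C : ℝ) (hC : 0 ≤ C)
    (hb : ∀ x, |⟪T x, x⟫| ≤ C * ‖x‖ ^ 2) : ‖T‖ ≤ C := by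
  have key : ∀ x y : EuclideanSpace ℝ (Fin n),
      ⟪T x, y⟫ ≤ C / 2 * (‖x‖ ^ 2 + ‖y‖ ^ 2) := by
    intro x y
    have h4 : (4 : ℝ) * ⟪T x, y⟫ = ⟪T (x + y), x + y⟫ - ⟪T (x - y), x - y⟫ := by
      have h1 : ⟪T y, x⟫ = ⟪T x, y⟫ := by
        rw [real_inner_comm, hsym x y]
      simp only [map_add, map_sub, inner_add_left, inner_add_right, inner_sub_left,
        inner_sub_right]
      linarith
    have hpar : ‖x + y‖ ^ 2 + ‖x - y‖ ^ 2 = 2 * (‖x‖ ^ 2 + ‖y‖ ^ 2) := by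
      have := parallelogram_law_with_norm ℝ x y
      ring_nf
      ring_nf at this
      nlinarith [this]
    have hb1 := hb (x + y)
    have hb2 := hb (x - y)
    have := abs_le.mp hb1
    have := abs_le.mp hb2
    nlinarith [abs_le.mp hb1, abs_le.mp hb2]
  refine T.opNorm_le_bound hC (fun x => ?_)
  rcases eq_or_ne (‖T x‖) 0 with h0 | h0
  · rw [h0]; positivity
  · have hb' : 0 < ‖T x‖ := lt_of_le_of_ne (norm_nonneg _) (Ne.symm h0)
    have hx0 : x ≠ 0 := by
      rintro rfl; simp at h0
    have ha : 0 < ‖x‖ := norm_pos_iff.mpr hx0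
    set a := ‖x‖
    set b := ‖T x‖
    set c := Real.sqrt (b / a) with hc
    have hc0 : 0 < c := Real.sqrt_pos.mpr (by positivity)
    have hc2 : c ^ 2 = b / a := Real.sq_sqrt (by positivity)
    have := key (c • x) (c⁻¹ • T x)
    rw [T.map_smul] at this
    rw [inner_smul_left, inner_smul_right] at this
    have hTx : ⟪T x, T x⟫ = b ^ 2 := by
      rw [real_inner_self_eq_norm_sq]
    rw [hTx] at this
    simp only [norm_smul, Real.norm_eq_abs, abs_of_pos hc0, abs_of_pos (inv_pos.mpr hc0),
      conj_trivial] at this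
    have hcc : c * (c⁻¹ * b ^ 2) = b ^ 2 := by
      field_simp
    have h5 : b ^ 2 ≤ C / 2 * ((c * a) ^ 2 + (c⁻¹ * b) ^ 2) := by
      rw [← hcc]; exact this
    have hrhs : C / 2 * ((c * a) ^ 2 + (c⁻¹ * b) ^ 2) = C * a * b := by
      have : (c * a) ^ 2 = (b / a) * a ^ 2 := by rw [mul_pow, hc2]
      rw [this]
      have h2 : (c⁻¹ * b) ^ 2 = (a / b) * b ^ 2 := by
        rw [mul_pow, inv_pow, hc2]
        field_simp
      rw [h2]
      field_simp
      ring
    rw [hrhs] at h5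
    nlinarith [h5, hb', ha]


lemma inner_toEuclideanCLM {n : ℕ} (M : Matrix (Fin n) (Fin n) ℝ) (x : EuclideanSpace ℝ (Fin n)) :
    ⟪(Matrix.toEuclideanCLM (𝕜 := ℝ) M) x, x⟫ = ∑ i, (∑ j, M i j * x j) * x i := by
  rw [PiLp.inner_apply]
  refine Finset.sum_congr rfl fun i _ => ?_
  simp only [RCLike.inner_apply, conj_trivial]
  rw [mul_comm]
  congr 1

lemma norm_sq_eval {n : ℕ} (x : EuclideanSpace ℝ (Fin n)) : ‖x‖ ^ 2 = ∑ i, x i ^ 2 := by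
  rw [← real_inner_self_eq_norm_sq, PiLp.inner_apply]
  simp [RCLike.inner_apply, sq]

lemma sum_bound {n : ℕ} (A : Matrix (Fin n) (Fin n) ℝ)
    (hA_symm : A.IsSymm) (hA_nonneg : ∀ i j, 0 ≤ A i j)
    (Drow : Fin n → ℝ) (hDrow : ∀ i, Drow i = ∑ j, A i j) (hDpos : ∀ i, 0 < Drow i)
    (τ : ℝ) (hτ : 0 ≤ τ) (x : Fin n → ℝ) :
    |∑ i, (∑ j, ((Real.sqrt (Drow i + τ))⁻¹ * A i j * (Real.sqrt (Drow j + τ))⁻¹) * x j) * x i|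
      ≤ ∑ i, x i ^ 2 := by
  set f : Fin n → ℝ := fun i => (Real.sqrt (Drow i + τ))⁻¹ with hf
  have hdp : ∀ i, 0 < Drow i + τ := fun i => by linarith [hDpos i]
  have hf2 : ∀ i, f i ^ 2 = (Drow i + τ)⁻¹ := by
    intro i
    rw [hf]
    rw [inv_pow, Real.sq_sqrt (hdp i).le]
  set u : Fin n → ℝ := fun i => (f i * x i) ^ 2 with hu
  have hpt : ∀ i j, |(f i * A i j * f j) * x j * x i| ≤ A i j * (u i + u j) / 2 := by
    intro i j
    have h1 : |(f i * A i j * f j) * x j * x i| = A i j * (|f i * x i| * |f j * x j|) := by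
      rw [show (f i * A i j * f j) * x j * x i = A i j * ((f i * x i) * (f j * x j)) by ring,
        abs_mul, abs_mul, abs_of_nonneg (hA_nonneg i j)]
    have hab : |f i * x i| * |f j * x j| ≤ (u i + u j) / 2 := by
      have h3 : u i = |f i * x i| ^ 2 := (sq_abs _).symm
      have h4 : u j = |f j * x j| ^ 2 := (sq_abs _).symm
      nlinarith [sq_nonneg (|f i * x i| - |f j * x j|)]
    rw [h1, mul_div_assoc]
    exact mul_le_mul_of_nonneg_left hab (hA_nonneg i j)
  have e1 : ∑ i, ∑ j, A i j * u i / 2 = ∑ i, u i * Drow i / 2 := by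
    refine Finset.sum_congr rfl fun i _ => ?_
    simp_rw [mul_div_assoc]
    rw [← Finset.sum_mul, ← hDrow i]
    ring
  have e2 : ∑ i, ∑ j, A i j * u j / 2 = ∑ i, u i * Drow i / 2 := by
    rw [Finset.sum_comm]
    refine Finset.sum_congr rfl fun j _ => ?_
    simp_rw [mul_div_assoc]
    rw [← Finset.sum_mul]
    have hcol : ∑ x, A x j = Drow j := by
      rw [hDrow j]
      exact Finset.sum_congr rfl fun x _ => hA_symm.apply j x
    rw [hcol]
    ring
  calc |∑ i, (∑ j, (f i * A i j * f j) * x j) * x i|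
      ≤ ∑ i, |(∑ j, (f i * A i j * f j) * x j) * x i| := Finset.abs_sum_le_sum_abs _ _
    _ ≤ ∑ i, ∑ j, |(f i * A i j * f j) * x j * x i| := by
        refine Finset.sum_le_sum fun i _ => ?_
        rw [abs_mul]
        calc |∑ j, (f i * A i j * f j) * x j| * |x i|
            ≤ (∑ j, |(f i * A i j * f j) * x j|) * |x i| :=
              mul_le_mul_of_nonneg_right (Finset.abs_sum_le_sum_abs _ _) (abs_nonneg _)
          _ = ∑ j, |(f i * A i j * f j) * x j * x i| := by
              rw [Finset.sum_mul]
              exact Finset.sum_congr rfl fun j _ => (abs_mul _ _).symm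
    _ ≤ ∑ i, ∑ j, A i j * (u i + u j) / 2 :=
        Finset.sum_le_sum fun i _ => Finset.sum_le_sum fun j _ => hpt i j
    _ = (∑ i, ∑ j, A i j * u i / 2) + ∑ i, ∑ j, A i j * u j / 2 := by
        rw [← Finset.sum_add_distrib]
        refine Finset.sum_congr rfl fun i _ => ?_
        rw [← Finset.sum_add_distrib]
        exact Finset.sum_congr rfl fun j _ => by ring
    _ = ∑ i, u i * Drow i := by
        rw [e1, e2, ← Finset.sum_add_distrib]
        exact Finset.sum_congr rfl fun i _ => by ring
    _ ≤ ∑ i, x i ^ 2 := by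
        refine Finset.sum_le_sum fun i _ => ?_
        have heq : u i * Drow i = x i ^ 2 * (Drow i * (Drow i + τ)⁻¹) := by
          rw [hu]; simp only [mul_pow, hf2]; ring
        rw [heq]
        have hle : Drow i * (Drow i + τ)⁻¹ ≤ 1 := by
          rw [mul_inv_le_iff₀ (hdp i), one_mul]; linarith
        nlinarith [sq_nonneg (x i)]

/-- for a symmetric nonnegative matrix `A` with positive row sums `D`, a
regularizer `τ ≥ 0`, `D_τ = D + τI`, `L_τ = D_τ^{-1/2} A D_τ^{-1/2}`, and any positive definite
diagonal matrix `𝒟_τ`, one has `‖L_τ‖ ≤ 1` and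
`‖D_τ^{-1/2} A D_τ^{-1/2} − 𝒟_τ^{-1/2} A 𝒟_τ^{-1/2}‖ ≤ 2‖I − D_τ^{1/2}𝒟_τ^{-1/2}‖
  + ‖I − D_τ^{1/2}𝒟_τ^{-1/2}‖²`. -/
theorem stmt_15
    {n : ℕ} (A : Matrix (Fin n) (Fin n) ℝ)
    (hA_symm : A.IsSymm) (hA_nonneg : ∀ i j, 0 ≤ A i j)
    (Drow : Fin n → ℝ) (hDrow : ∀ i, Drow i = ∑ j, A i j) (hDpos : ∀ i, 0 < Drow i)
    (τ : ℝ) (hτ : 0 ≤ τ)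
    (Ltau : Matrix (Fin n) (Fin n) ℝ)
    (hLtau : Ltau = Matrix.diagonal (fun i => (Real.sqrt (Drow i + τ))⁻¹) * A *
      Matrix.diagonal (fun i => (Real.sqrt (Drow i + τ))⁻¹))
    (d : Fin n → ℝ) (hd : ∀ i, 0 < d i)
    (E : Matrix (Fin n) (Fin n) ℝ)
    (hE : E = Matrix.diagonal (fun i => Real.sqrt (Drow i + τ) * (Real.sqrt (d i))⁻¹)) :
    specNorm Ltau ≤ 1 ∧
    specNorm (Ltau - Matrix.diagonal (fun i => (Real.sqrt (d i))⁻¹) * A *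
        Matrix.diagonal (fun i => (Real.sqrt (d i))⁻¹)) ≤
      2 * specNorm (1 - E) + specNorm (1 - E) ^ 2 := by
  have hdp : ∀ i, 0 < Drow i + τ := fun i => by linarith [hDpos i]
  have hsqrt_ne : ∀ i, Real.sqrt (Drow i + τ) ≠ 0 :=
    fun i => ne_of_gt (Real.sqrt_pos.mpr (hdp i))
  -- entries of Ltau
  have hentry : ∀ i j, Ltau i j =
      (Real.sqrt (Drow i + τ))⁻¹ * A i j * (Real.sqrt (Drow j + τ))⁻¹ := by
    intro i j
    rw [hLtau, Matrix.mul_diagonal, Matrix.diagonal_mul]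
  -- Ltau is hermitian
  have hH : Ltau.IsHermitian := by
    rw [Matrix.IsHermitian, Matrix.conjTranspose_eq_transpose_of_trivial, hLtau]
    simp [Matrix.transpose_mul, Matrix.diagonal_transpose, hA_symm.eq, Matrix.mul_assoc]
  rw [Matrix.isHermitian_iff_isSymmetric] at hH
  set T := Matrix.toEuclideanCLM (𝕜 := ℝ) Ltau with hT
  have hsym : ∀ x y, ⟪T x, y⟫ = ⟪x, T y⟫ := fun x y => hH x y
  have hb : ∀ x : EuclideanSpace ℝ (Fin n), |⟪T x, x⟫| ≤ 1 * ‖x‖ ^ 2 := by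
    intro x
    rw [hT, inner_toEuclideanCLM, one_mul, norm_sq_eval]
    have hsb := sum_bound A hA_symm hA_nonneg Drow hDrow hDpos τ hτ (fun i => x i)
    simp_rw [hentry]
    exact hsb
  have part1 : specNorm Ltau ≤ 1 := polar_norm_le T hsym 1 zero_le_one hb
  refine ⟨part1, ?_⟩
  -- part 2
  have hsd_ne : ∀ i, Real.sqrt (d i) ≠ 0 := fun i => ne_of_gt (Real.sqrt_pos.mpr (hd i))
  have hM : E * Ltau * E = Matrix.diagonal (fun i => (Real.sqrt (d i))⁻¹) * A *
      Matrix.diagonal (fun i => (Real.sqrt (d i))⁻¹) := by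
    have h1 : E * Matrix.diagonal (fun i => (Real.sqrt (Drow i + τ))⁻¹) =
        Matrix.diagonal (fun i => (Real.sqrt (d i))⁻¹) := by
      rw [hE, Matrix.diagonal_mul_diagonal]
      refine congrArg Matrix.diagonal (funext fun i => ?_)
      rw [mul_comm (Real.sqrt (Drow i + τ)) ((Real.sqrt (d i))⁻¹), mul_assoc,
        mul_inv_cancel₀ (hsqrt_ne i), mul_one]
    have h2 : Matrix.diagonal (fun i => (Real.sqrt (Drow i + τ))⁻¹) * E =
        Matrix.diagonal (fun i => (Real.sqrt (d i))⁻¹) := by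
      rw [hE, Matrix.diagonal_mul_diagonal]
      refine congrArg Matrix.diagonal (funext fun i => ?_)
      rw [← mul_assoc, inv_mul_cancel₀ (hsqrt_ne i), one_mul]
    calc E * Ltau * E
        = (E * Matrix.diagonal (fun i => (Real.sqrt (Drow i + τ))⁻¹)) * A *
          (Matrix.diagonal (fun i => (Real.sqrt (Drow i + τ))⁻¹) * E) := by
          rw [hLtau]
          simp only [Matrix.mul_assoc]
      _ = _ := by rw [h1, h2]
  have hkey : Ltau - Matrix.diagonal (fun i => (Real.sqrt (d i))⁻¹) * A *
      Matrix.diagonal (fun i => (Real.sqrt (d i))⁻¹) =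
      (1 - E) * Ltau + (E * Ltau) * (1 - E) := by
    rw [← hM]
    noncomm_ring
  rw [hkey]
  unfold specNorm
  rw [map_add, _root_.map_mul, _root_.map_mul, _root_.map_mul]
  set Φ := Matrix.toEuclideanCLM (𝕜 := ℝ) (n := Fin n) with hΦ
  set b := Φ (1 - E) with hbdef
  set a := Φ Ltau with hadef
  have ha1 : ‖a‖ ≤ 1 := part1
  have heb : Φ E = 1 - b := by
    rw [hbdef, ← _root_.map_one Φ, ← _root_.map_sub]
    exact congrArg Φ (sub_sub_cancel 1 E).symm
  have hone : ‖(1 : EuclideanSpace ℝ (Fin n) →L[ℝ] EuclideanSpace ℝ (Fin n))‖ ≤ 1 := by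
    rw [ContinuousLinearMap.one_def]
    exact ContinuousLinearMap.norm_id_le
  have he : ‖Φ E‖ ≤ 1 + ‖b‖ := by
    rw [heb]
    calc ‖1 - b‖ ≤ ‖(1 : EuclideanSpace ℝ (Fin n) →L[ℝ] EuclideanSpace ℝ (Fin n))‖ + ‖b‖ :=
          norm_sub_le _ _
      _ ≤ 1 + ‖b‖ := by linarith
  have step : ‖b * a + Φ E * a * b‖ ≤ ‖b‖ * ‖a‖ + ‖Φ E‖ * ‖a‖ * ‖b‖ := by
    calc ‖b * a + Φ E * a * b‖ ≤ ‖b * a‖ + ‖Φ E * a * b‖ := norm_add_le _ _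
      _ ≤ ‖b‖ * ‖a‖ + ‖Φ E‖ * ‖a‖ * ‖b‖ := by
          refine add_le_add (norm_mul_le _ _) ?_
          calc ‖Φ E * a * b‖ ≤ ‖Φ E * a‖ * ‖b‖ := norm_mul_le _ _
            _ ≤ ‖Φ E‖ * ‖a‖ * ‖b‖ :=
              mul_le_mul_of_nonneg_right (norm_mul_le _ _) (norm_nonneg _)
  have hbnn : (0:ℝ) ≤ ‖b‖ := norm_nonneg _
  have hann : (0:ℝ) ≤ ‖a‖ := norm_nonneg _
  have henn : (0:ℝ) ≤ ‖Φ E‖ := norm_nonneg _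
  nlinarith [step, mul_le_mul_of_nonneg_right he hbnn]
end

section
/- Under the MMSB setup, for every node i (1 ≤ i ≤ n), √(λ_K(Π'Π)/(τ+δ_max)) ≤ 𝒟_τ^{-1/2}(i,i)/‖V(i,:)‖ ≤ √(K λ_1(Π'Π)/(τ+δ_min)). -/
open Matrix BigOperators

lemma dot_tmulVec {a b : ℕ} (M : Matrix (Fin a) (Fin b) ℝ) (x : Fin a → ℝ) (y : Fin b → ℝ) :
    (Mᵀ *ᵥ x) ⬝ᵥ y = x ⬝ᵥ (M *ᵥ y) := by
  rw [Matrix.mulVec_transpose, Matrix.dotProduct_mulVec]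

lemma quad_id {a b : ℕ} (P : Matrix (Fin a) (Fin b) ℝ) (y : Fin b → ℝ) :
    y ⬝ᵥ ((Pᵀ * P) *ᵥ y) = ∑ j, ((P *ᵥ y) j) ^ 2 := by
  rw [← Matrix.mulVec_mulVec, dotProduct_comm, dot_tmulVec, dotProduct_comm]
  simp [dotProduct, sq]

lemma quad_diag {a b : ℕ} (P : Matrix (Fin a) (Fin b) ℝ) (c : Fin a → ℝ) (y : Fin b → ℝ) :
    y ⬝ᵥ ((Pᵀ * Matrix.diagonal c * P) *ᵥ y) = ∑ j, c j * ((P *ᵥ y) j) ^ 2 := by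
  rw [Matrix.mul_assoc, ← Matrix.mulVec_mulVec, dotProduct_comm, dot_tmulVec]
  rw [← Matrix.mulVec_mulVec]
  simp only [dotProduct, Matrix.mulVec_diagonal]
  exact Finset.sum_congr rfl fun j _ => by ring

lemma rayleigh {k : ℕ} (A : Matrix (Fin k) (Fin k) ℝ) (hA : A.IsHermitian)
    (y : Fin k → ℝ) :
    (⨅ j, hA.eigenvalues j) * ∑ j, y j ^ 2 ≤ y ⬝ᵥ (A *ᵥ y) ∧
      y ⬝ᵥ (A *ᵥ y) ≤ (⨆ j, hA.eigenvalues j) * ∑ j, y j ^ 2 := by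
  set U : Matrix (Fin k) (Fin k) ℝ := (Matrix.IsHermitian.eigenvectorUnitary hA : Matrix (Fin k) (Fin k) ℝ) with hU
  have hUmem := (Matrix.IsHermitian.eigenvectorUnitary hA).2
  have h1 : U * star U = 1 := (Matrix.mem_unitaryGroup_iff).mp hUmem
  have hstar : star U = Uᵀ := by
    ext i j
    simp [Matrix.star_eq_conjTranspose, Matrix.conjTranspose_apply, Matrix.transpose_apply]
  rw [hstar] at h1
  set u : Fin k → ℝ := Uᵀ *ᵥ y with hu
  have huy : U *ᵥ u = y := by
    rw [hu, Matrix.mulVec_mulVec, h1, Matrix.one_mulVec]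
  have hsum : ∑ j, u j ^ 2 = ∑ j, y j ^ 2 := by
    have h2 : u ⬝ᵥ u = y ⬝ᵥ y := by
      conv_lhs => rw [hu, dot_tmulVec, huy]
    simpa [dotProduct, sq] using h2
  have hAy : y ⬝ᵥ (A *ᵥ y) = ∑ j, hA.eigenvalues j * u j ^ 2 := by
    have hsp := hA.spectral_theorem
    rw [Unitary.conjStarAlgAut_apply, hstar] at hsp
    have hdiag : Matrix.diagonal (RCLike.ofReal ∘ hA.eigenvalues) =
        Matrix.diagonal hA.eigenvalues := by
      congr 1
    rw [hdiag] at hsp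
    conv_lhs => rw [hsp]
    rw [← hU, Matrix.mul_assoc, ← Matrix.mulVec_mulVec, ← Matrix.mulVec_mulVec, ← hu, ← dot_tmulVec, ← hu]
    simp only [dotProduct, Matrix.mulVec_diagonal]
    exact Finset.sum_congr rfl fun j _ => by ring
  have hbddA : BddAbove (Set.range hA.eigenvalues) := Set.Finite.bddAbove (Set.finite_range _)
  have hbddB : BddBelow (Set.range hA.eigenvalues) := Set.Finite.bddBelow (Set.finite_range _)
  constructor
  · rw [hAy, ← hsum, Finset.mul_sum]
    exact Finset.sum_le_sum fun j _ =>
      mul_le_mul_of_nonneg_right (ciInf_le hbddB j) (sq_nonneg _)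
  · rw [hAy, ← hsum, Finset.mul_sum]
    exact Finset.sum_le_sum fun j _ =>
      mul_le_mul_of_nonneg_right (le_ciSup hbddA j) (sq_nonneg _)

set_option maxHeartbeats 1000000 in
/-- from the proof of Lemma B.2: for every node `i`,
`√(λ_K(Π'Π)/(τ+δ_max)) ≤ 𝒟_τ^{-1/2}(i,i)/‖V(i,:)‖ ≤ √(K λ₁(Π'Π)/(τ+δ_min))`. -/
theorem stmt_19
    {n K : ℕ} (hn : 0 < n) (hK : 0 < K) (hKn : K ≤ n)
    (Pi : Matrix (Fin n) (Fin K) ℝ)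
    (hPi_nonneg : ∀ i k, 0 ≤ Pi i k)
    (hPi_rowsum : ∀ i, ∑ k, Pi i k = 1)
    (hPi_rank : Pi.rank = K)
    (hpure : ∀ k : Fin K, ∃ i : Fin n, ∀ l, Pi i l = if l = k then 1 else 0)
    (Pt : Matrix (Fin K) (Fin K) ℝ)
    (hPt_symm : Pt.IsSymm)
    (hPt_nonneg : ∀ k l, 0 ≤ Pt k l)
    (hPt_rank : Pt.rank = K)
    (hPt_le_one : ∀ k l, Pt k l ≤ 1)
    (hPt_max : ∃ k l, Pt k l = 1)
    (ρ τ : ℝ) (hρ0 : 0 < ρ) (hρ1 : ρ ≤ 1) (hτ : 0 ≤ τ)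
    (Om : Matrix (Fin n) (Fin n) ℝ) (hOm : Om = Pi * (ρ • Pt) * Piᵀ)
    (deg : Fin n → ℝ) (hdeg : ∀ i, deg i = ∑ j, Om i j)
    (hpos : ∀ i, 0 < deg i + τ)
    (Ltau : Matrix (Fin n) (Fin n) ℝ)
    (hLtau : Ltau = Matrix.diagonal (fun i => (Real.sqrt (deg i + τ))⁻¹) * Om *
      Matrix.diagonal (fun i => (Real.sqrt (deg i + τ))⁻¹))
    (Idx : Fin K → Fin n) (hIdx : Pi.submatrix Idx id = 1)
    (V : Matrix (Fin n) (Fin K) ℝ) (e : Fin K → ℝ)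
    (hVorth : Vᵀ * V = 1) (he : ∀ k, e k ≠ 0)
    (hVE : Ltau = V * Matrix.diagonal e * Vᵀ)
    (hVrow : ∀ i, V i ≠ 0)
    (hH : (Piᵀ * Pi).IsHermitian) :
    ∀ i : Fin n,
      Real.sqrt ((⨅ k, hH.eigenvalues k) / (τ + ⨆ j, deg j)) ≤
        (Real.sqrt (deg i + τ))⁻¹ / rowNorm V i ∧
      (Real.sqrt (deg i + τ))⁻¹ / rowNorm V i ≤
        Real.sqrt ((K : ℝ) * (⨆ k, hH.eigenvalues k) / (τ + ⨅ j, deg j)) := by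
  intro i
  haveI : Nonempty (Fin n) := ⟨⟨0, hn⟩⟩
  haveI : Nonempty (Fin K) := ⟨⟨0, hK⟩⟩
  -- abbreviations
  set S := Matrix.diagonal (fun j => (Real.sqrt (deg j + τ))⁻¹) with hSdef
  set N := Matrix.diagonal (fun j => (deg j + τ)⁻¹) with hNdef
  have hsqrtpos : ∀ j, 0 < Real.sqrt (deg j + τ) := fun j => Real.sqrt_pos.2 (hpos j)
  have hS2 : S * S = N := by
    have hj : ∀ j : Fin n, (Real.sqrt (deg j + τ))⁻¹ * (Real.sqrt (deg j + τ))⁻¹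
        = (deg j + τ)⁻¹ := fun j => by
      rw [← mul_inv, Real.mul_self_sqrt (hpos j).le]
    rw [hSdef, hNdef, Matrix.diagonal_mul_diagonal]
    exact congrArg _ (funext hj)
  set E' := Matrix.diagonal (fun k => (e k)⁻¹) with hE'def
  have hEE' : Matrix.diagonal e * E' = 1 := by
    rw [hE'def, Matrix.diagonal_mul_diagonal]
    have h : (fun k => e k * (e k)⁻¹) = fun _ => (1:ℝ) := funext fun k => mul_inv_cancel₀ (he k)
    rw [h, Matrix.diagonal_one]
  have hLV : Ltau * V = V * Matrix.diagonal e := by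
    rw [hVE]
    simp only [Matrix.mul_assoc]
    rw [hVorth, Matrix.mul_one]
  set B := (ρ • Pt) * Piᵀ * S * V * E' with hBdef
  have hVB : S * Pi * B = V := by
    have h1 : V = Ltau * V * E' := by
      rw [hLV, Matrix.mul_assoc, hEE', Matrix.mul_one]
    rw [hBdef]
    conv_rhs => rw [h1, hLtau, hOm]
    simp only [Matrix.mul_assoc]
  have hBMB : Bᵀ * (Piᵀ * N * Pi) * B = 1 := by
    have h2 : Bᵀ * (Piᵀ * N * Pi) * B = (S * Pi * B)ᵀ * (S * Pi * B) := by
      rw [← hS2, hSdef]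
      simp only [Matrix.transpose_mul, Matrix.diagonal_transpose, Matrix.mul_assoc]
    rw [h2, hVB, hVorth]
  -- quadratic identity
  have hq : ∀ z : Fin K → ℝ,
      ∑ j, (deg j + τ)⁻¹ * ((Pi *ᵥ (B *ᵥ z)) j) ^ 2 = ∑ k, z k ^ 2 := by
    intro z
    have h0 : z ⬝ᵥ ((Bᵀ * (Piᵀ * N * Pi) * B) *ᵥ z) = ∑ k, z k ^ 2 := by
      rw [hBMB, Matrix.one_mulVec]
      simp [dotProduct, sq]
    rw [← h0]
    conv_rhs => rw [← Matrix.mulVec_mulVec, ← Matrix.mulVec_mulVec,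
      dotProduct_comm, dot_tmulVec, dotProduct_comm, hNdef, quad_diag]
  -- scalar bounds on degrees
  have hbddA : BddAbove (Set.range deg) := Set.Finite.bddAbove (Set.finite_range _)
  have hbddB : BddBelow (Set.range deg) := Set.Finite.bddBelow (Set.finite_range _)
  set dmax := ⨆ j, deg j with hdmax
  set dmin := ⨅ j, deg j with hdmin
  have hup : ∀ j, deg j ≤ dmax := fun j => le_ciSup hbddA j
  have hlo : ∀ j, dmin ≤ deg j := fun j => ciInf_le hbddB j
  have hδmax : 0 < τ + dmax := by have h1 := hup i; have h2 := hpos i; linarith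
  have hδmin : 0 < τ + dmin := by
    obtain ⟨j0, hj0⟩ := Finite.exists_min deg
    have h1 : deg j0 ≤ dmin := by rw [hdmin]; exact le_ciInf hj0
    have h2 := hpos j0
    linarith
  set lam_lo := ⨅ k, hH.eigenvalues k with hlamlo
  set lam_hi := ⨆ k, hH.eigenvalues k with hlamhi
  -- lam_hi ≥ 1
  have hlamhi1 : 1 ≤ lam_hi := by
    obtain ⟨i0, hi0⟩ := hpure ⟨0, hK⟩
    set y0 : Fin K → ℝ := fun l => if l = (⟨0, hK⟩ : Fin K) then 1 else 0 with hy0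
    have hsum0 : ∑ l, y0 l ^ 2 = 1 := by simp [hy0]
    have h2 := (rayleigh (Piᵀ * Pi) hH y0).2
    rw [quad_id, hsum0, mul_one, ← hlamhi] at h2
    have h4 : ((Pi *ᵥ y0) i0) ^ 2 = 1 := by
      have : (Pi *ᵥ y0) i0 = Pi i0 ⟨0, hK⟩ := by
        simp [hy0, Matrix.mulVec, dotProduct]
      rw [this, hi0 ⟨0, hK⟩]
      simp
    have h3 : (1:ℝ) ≤ ∑ j, ((Pi *ᵥ y0) j) ^ 2 := by
      calc (1:ℝ) = ((Pi *ᵥ y0) i0) ^ 2 := h4.symm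
        _ ≤ ∑ j, ((Pi *ᵥ y0) j) ^ 2 :=
          Finset.single_le_sum (f := fun j => ((Pi *ᵥ y0) j) ^ 2)
            (fun j _ => sq_nonneg _) (Finset.mem_univ i0)
    linarith
  -- row vector and transformed vector
  set x : Fin K → ℝ := fun k => Pi i k with hx
  set w : Fin K → ℝ := Bᵀ *ᵥ x with hw
  set W := ∑ j, w j ^ 2 with hW
  set X := ∑ k, x k ^ 2 with hX
  have hVi : ∀ j, V i j = (Real.sqrt (deg i + τ))⁻¹ * w j := by
    intro j
    conv_lhs => rw [← hVB]
    rw [Matrix.mul_assoc, hSdef, Matrix.diagonal_mul, Matrix.mul_apply, hw, hx]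
    simp only [Matrix.mulVec, dotProduct, Matrix.transpose_apply]
    congr 1
    exact Finset.sum_congr rfl fun k _ => by ring
  have hsipos : 0 < (Real.sqrt (deg i + τ))⁻¹ := inv_pos.2 (hsqrtpos i)
  obtain ⟨j1, hj1⟩ : ∃ j, w j ≠ 0 := by
    obtain ⟨j, hj⟩ := Function.ne_iff.1 (hVrow i)
    exact ⟨j, fun h => hj (by simp [hVi j, h])⟩
  have hWpos : 0 < W := by
    rw [hW]
    have h1 : 0 < w j1 ^ 2 := lt_of_le_of_ne (sq_nonneg _) (Ne.symm (pow_ne_zero 2 hj1))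
    exact Finset.sum_pos' (fun j _ => sq_nonneg _) ⟨j1, Finset.mem_univ j1, h1⟩
  have hrn : rowNorm V i = (Real.sqrt (deg i + τ))⁻¹ * Real.sqrt W := by
    unfold rowNorm
    have h1 : ∑ j, (V i j) ^ 2 = ((Real.sqrt (deg i + τ))⁻¹) ^ 2 * W := by
      rw [hW, Finset.mul_sum]
      exact Finset.sum_congr rfl fun j _ => by rw [hVi j]; ring
    rw [h1, Real.sqrt_mul (sq_nonneg _), Real.sqrt_sq hsipos.le]
  have hratio : (Real.sqrt (deg i + τ))⁻¹ / rowNorm V i = (Real.sqrt W)⁻¹ := by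
    rw [hrn, div_mul_eq_div_div, div_self (ne_of_gt hsipos), one_div]
  -- bounds on X
  have hX1 : X ≤ 1 := by
    rw [hX]
    calc ∑ k, x k ^ 2 ≤ ∑ k, x k := by
          refine Finset.sum_le_sum fun k _ => ?_
          have h1 : x k ≤ 1 := by
            rw [hx, ← hPi_rowsum i]
            exact Finset.single_le_sum (fun l _ => hPi_nonneg i l) (Finset.mem_univ k)
          have h2 : 0 ≤ x k := hPi_nonneg i k
          nlinarith
      _ = 1 := hPi_rowsum i
  have hKX : 1 ≤ (K:ℝ) * X := by
    have h := sq_sum_le_card_mul_sum_sq (s := Finset.univ) (f := x)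
    have hxsum : ∑ k, x k = 1 := hPi_rowsum i
    rw [hxsum, one_pow, Finset.card_univ, Fintype.card_fin, ← hX] at h
    exact h
  have hK0 : (0:ℝ) < (K:ℝ) := by exact_mod_cast hK
  have hXpos : 0 < X := by nlinarith
  -- dot product identities
  have hWdot : W = x ⬝ᵥ (B *ᵥ w) := by
    rw [← dot_tmulVec, ← hw, hW]
    simp [dotProduct, sq]
  have hdetB : IsUnit B.det := by
    have h1 := congrArg Matrix.det hBMB
    rw [Matrix.det_mul, Matrix.det_mul, Matrix.det_one, Matrix.det_transpose] at h1
    exact IsUnit.of_mul_eq_one _ (by rw [← mul_assoc]; exact h1)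
  set z : Fin K → ℝ := B⁻¹ *ᵥ x with hz
  have hBz : B *ᵥ z = x := by
    rw [hz, Matrix.mulVec_mulVec, Matrix.mul_nonsing_inv _ hdetB, Matrix.one_mulVec]
  set Z := ∑ k, z k ^ 2 with hZ
  have hZ0 : 0 ≤ Z := Finset.sum_nonneg fun k _ => sq_nonneg _
  have hXdot : X = w ⬝ᵥ z := by
    rw [hw, dot_tmulVec, hBz, hX]
    simp [dotProduct, sq]
  set T := ∑ k, (B *ᵥ w) k ^ 2 with hT
  have hT0 : 0 ≤ T := Finset.sum_nonneg fun k _ => sq_nonneg _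
  have hcs1 : W ^ 2 ≤ X * T := by
    rw [hWdot, hX, hT]
    have h := Finset.sum_mul_sq_le_sq_mul_sq Finset.univ x (fun k => (B *ᵥ w) k)
    simpa [dotProduct] using h
  have hcs2 : X ^ 2 ≤ W * Z := by
    rw [hXdot, hW, hZ]
    have h := Finset.sum_mul_sq_le_sq_mul_sq Finset.univ w z
    simpa [dotProduct] using h
  -- weighted sum bounds
  set p := Pi *ᵥ (B *ᵥ w) with hp
  have hup1 : ∑ j, p j ^ 2 ≤ (τ + dmax) * W := by
    have h5 := hq w
    rw [← hW, ← hp] at h5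
    calc ∑ j, p j ^ 2 ≤ ∑ j, (τ + dmax) * ((deg j + τ)⁻¹ * p j ^ 2) := by
          refine Finset.sum_le_sum fun j _ => ?_
          have hgeq1 : 1 ≤ (τ + dmax) * (deg j + τ)⁻¹ := by
            rw [← div_eq_mul_inv, le_div_iff₀ (hpos j)]
            have := hup j; linarith
          calc p j ^ 2 = 1 * p j ^ 2 := (one_mul _).symm
            _ ≤ ((τ + dmax) * (deg j + τ)⁻¹) * p j ^ 2 :=
                mul_le_mul_of_nonneg_right hgeq1 (sq_nonneg _)
            _ = (τ + dmax) * ((deg j + τ)⁻¹ * p j ^ 2) := by ring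
      _ = (τ + dmax) * ∑ j, (deg j + τ)⁻¹ * p j ^ 2 := by rw [Finset.mul_sum]
      _ = (τ + dmax) * W := by rw [h5]
  have hlow1 : (τ + dmin) * Z ≤ ∑ j, ((Pi *ᵥ x) j) ^ 2 := by
    have h5 := hq z
    rw [hBz, ← hZ] at h5
    calc (τ + dmin) * Z = ∑ j, (τ + dmin) * ((deg j + τ)⁻¹ * ((Pi *ᵥ x) j) ^ 2) := by
          rw [← Finset.mul_sum, h5]
      _ ≤ ∑ j, ((Pi *ᵥ x) j) ^ 2 := by
          refine Finset.sum_le_sum fun j _ => ?_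
          have hle1 : (τ + dmin) * (deg j + τ)⁻¹ ≤ 1 := by
            rw [← div_eq_mul_inv, div_le_one (hpos j)]
            have := hlo j; linarith
          calc (τ + dmin) * ((deg j + τ)⁻¹ * ((Pi *ᵥ x) j) ^ 2)
              = ((τ + dmin) * (deg j + τ)⁻¹) * ((Pi *ᵥ x) j) ^ 2 := by ring
            _ ≤ 1 * ((Pi *ᵥ x) j) ^ 2 :=
                mul_le_mul_of_nonneg_right hle1 (sq_nonneg _)
            _ = ((Pi *ᵥ x) j) ^ 2 := one_mul _
  -- Rayleigh applications
  have hr1 := (rayleigh (Piᵀ * Pi) hH (B *ᵥ w)).1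
  rw [quad_id, ← hlamlo, ← hT, ← hp] at hr1
  have hr2 := (rayleigh (Piᵀ * Pi) hH x).2
  rw [quad_id, ← hlamhi, ← hX] at hr2
  -- combine
  have h34 : (τ + dmin) * Z ≤ lam_hi * X := le_trans hlow1 hr2
  have hstep : ((τ + dmin) * X) * X ≤ (W * lam_hi) * X := by
    calc ((τ + dmin) * X) * X = (τ + dmin) * X ^ 2 := by ring
      _ ≤ (τ + dmin) * (W * Z) := mul_le_mul_of_nonneg_left hcs2 hδmin.le
      _ = W * ((τ + dmin) * Z) := by ring
      _ ≤ W * (lam_hi * X) := mul_le_mul_of_nonneg_left h34 hWpos.le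
      _ = (W * lam_hi) * X := by ring
  have step1 : (τ + dmin) * X ≤ W * lam_hi := le_of_mul_le_mul_right hstep hXpos
  have hKl : 0 < (K:ℝ) * lam_hi := mul_pos hK0 (lt_of_lt_of_le one_pos hlamhi1)
  have hWge : (τ + dmin) / ((K:ℝ) * lam_hi) ≤ W := by
    rw [div_le_iff₀ hKl]
    have s3 : (τ + dmin) ≤ (τ + dmin) * ((K:ℝ) * X) := le_mul_of_one_le_right hδmin.le hKX
    nlinarith [mul_le_mul_of_nonneg_left step1 (le_of_lt hK0)]
  rw [hratio]
  constructor
  · -- lower bound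
    rcases le_or_gt lam_lo 0 with hcase | hcase
    · have h0 : Real.sqrt (lam_lo / (τ + dmax)) = 0 :=
        Real.sqrt_eq_zero'.2 (div_nonpos_iff.2 (Or.inr ⟨hcase, hδmax.le⟩))
      rw [h0]
      positivity
    · have k1 : (W * lam_lo) * W ≤ (τ + dmax) * W := by
        calc (W * lam_lo) * W = lam_lo * W ^ 2 := by ring
          _ ≤ lam_lo * (X * T) := mul_le_mul_of_nonneg_left hcs1 hcase.le
          _ ≤ lam_lo * (1 * T) :=
              mul_le_mul_of_nonneg_left (mul_le_mul_of_nonneg_right hX1 hT0) hcase.le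
          _ = lam_lo * T := by ring
          _ ≤ ∑ j, p j ^ 2 := hr1
          _ ≤ (τ + dmax) * W := hup1
      have k2 : W * lam_lo ≤ τ + dmax := le_of_mul_le_mul_right k1 hWpos
      have hWle : W ≤ (τ + dmax) / lam_lo := by
        rw [le_div_iff₀ hcase]; exact k2
      calc Real.sqrt (lam_lo / (τ + dmax)) = (Real.sqrt ((τ + dmax) / lam_lo))⁻¹ := by
            rw [← Real.sqrt_inv, inv_div]
        _ ≤ (Real.sqrt W)⁻¹ :=
            inv_anti₀ (Real.sqrt_pos.2 hWpos) (Real.sqrt_le_sqrt hWle)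
  · -- upper bound
    calc (Real.sqrt W)⁻¹ ≤ (Real.sqrt ((τ + dmin) / ((K:ℝ) * lam_hi)))⁻¹ :=
          inv_anti₀ (Real.sqrt_pos.2 (div_pos hδmin hKl)) (Real.sqrt_le_sqrt hWge)
      _ = Real.sqrt ((K:ℝ) * lam_hi / (τ + dmin)) := by rw [← Real.sqrt_inv, inv_div]
end
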